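/- Local complementation preserves connected components: if G' is obtained from a simple graph G by local complementation at a vertex v, then two vertices lie in the same connected component of G if and only if they lie in the same connected component of G'. -/

import Mathlib

/-- Local complementation of a simple graph `G` at a vertex `v`: toggles all
edges between pairs of distinct neighbors of `v`; all other adjacencies are
unchanged. -/
def localComp {V : Type*} (G : SimpleGraph V) (v : V) : SimpleGraph V where
  Adj a b := a ≠ b ∧
    (((G.Adj v a ∧ G.Adj v b) ∧ ¬ G.Adj a b) ∨ (¬(G.Adj v a ∧ G.Adj v b) ∧ G.Adj a b))
  symm := by
    constructor
    intro a b ⟨hab, h⟩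
    refine ⟨hab.symm, ?_⟩
    rcases h with ⟨⟨h1, h2⟩, h3⟩ | ⟨h1, h2⟩
    · exact Or.inl ⟨⟨h2, h1⟩, fun h => h3 h.symm⟩
    · exact Or.inr ⟨fun h => h1 ⟨h.2, h.1⟩, h2.symm⟩
  loopless := ⟨fun a h => h.1 rfl⟩

/-- Local complementation preserves connected components: two vertices are
connected by a walk in `localComp G v` iff they are in `G`. -/
theorem stmt11 {V : Type*} (G : SimpleGraph V) (v : V) (a b : V) :
    (localComp G v).Reachable a b ↔ G.Reachable a b := by
  have h1 : ∀ x y : V, (localComp G v).Adj x y → G.Reachable x y := by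
    intro x y ⟨hxy, h⟩
    rcases h with ⟨⟨h1, h2⟩, _⟩ | ⟨_, h2⟩
    · exact (h1.symm.reachable).trans h2.reachable
    · exact h2.reachable
  have h2 : ∀ x y : V, G.Adj x y → (localComp G v).Reachable x y := by
    intro x y hxy
    by_cases hv : G.Adj v x ∧ G.Adj v y
    · have hvx : (localComp G v).Adj v x :=
        ⟨hv.1.ne, Or.inr ⟨fun h => G.loopless.irrefl v h.1, hv.1⟩⟩
      have hvy : (localComp G v).Adj v y :=
        ⟨hv.2.ne, Or.inr ⟨fun h => G.loopless.irrefl v h.1, hv.2⟩⟩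
      exact (hvx.symm.reachable).trans hvy.reachable
    · exact SimpleGraph.Adj.reachable ⟨hxy.ne, Or.inr ⟨hv, hxy⟩⟩
  constructor
  · rintro ⟨w⟩
    induction w with
    | nil => exact SimpleGraph.Reachable.refl _
    | cons h _ ih => exact (h1 _ _ h).trans ih
  · rintro ⟨w⟩
    induction w with
    | nil => exact SimpleGraph.Reachable.refl _
    | cons h _ ih => exact (h2 _ _ h).trans ih
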